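/- For every integer i ≥ 2, Ω_{2^i}(x) = 2 · T_{2^{i-2}}(x) as real polynomials, where T is the Chebyshev polynomial of the first kind. -/

import Mathlib

open Polynomial Polynomial.Chebyshev

noncomputable def Omega (d : ℕ) : Polynomial ℝ :=
  if d = 1 then Polynomial.X - 1
  else ∏ k ∈ (Finset.range (d + 1)).filter (fun k => 1 ≤ k ∧ 2 * k ≤ d ∧ Nat.gcd k d = 1),
    (Polynomial.C 2 * (Polynomial.X - Polynomial.C (Real.cos (2 * k * Real.pi / d))))

lemma T_deg_coeff (n : ℕ) :
    (T ℝ n).natDegree ≤ n ∧ (T ℝ n).coeff n = 2 ^ (n - 1) := by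
  induction n using Nat.twoStepInduction with
  | zero => simp [Polynomial.Chebyshev.T_zero]
  | one => simp [Polynomial.Chebyshev.T_one]
  | more n ih1 ih2 =>
    have hcast : ((n + 2 : ℕ) : ℤ) = (n : ℤ) + 2 := by push_cast; ring
    rw [hcast, Polynomial.Chebyshev.T_add_two]
    have hT1 : ((n + 1 : ℕ) : ℤ) = (n : ℤ) + 1 := by push_cast; ring
    obtain ⟨hd1, hc1⟩ := ih2
    obtain ⟨hd0, hc0⟩ := ih1
    rw [hT1] at hd1 hc1
    constructor
    · refine le_trans (Polynomial.natDegree_sub_le _ _) (max_le ?_ (hd0.trans (by omega)))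
      refine le_trans (Polynomial.natDegree_mul_le) ?_
      have : (2 * X : Polynomial ℝ).natDegree ≤ 1 := by
        refine le_trans (Polynomial.natDegree_mul_le) ?_
        simp [Polynomial.natDegree_ofNat]
      omega
    · rw [Polynomial.coeff_sub, mul_assoc, Polynomial.coeff_ofNat_mul]
      have hx : (X * T ℝ ((n : ℤ) + 1)).coeff (n + 2) = (T ℝ ((n : ℤ) + 1)).coeff (n + 1) := by
        rw [Polynomial.coeff_X_mul]
      rw [hx, hc1, Polynomial.coeff_eq_zero_of_natDegree_lt (by omega), sub_zero,
        show (n + 1) - 1 = n by omega, show (n + 2) - 1 = n + 1 by omega, pow_succ]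
      ring

theorem omega_two_pow (i : ℕ) (hi : 2 ≤ i) :
    Omega (2 ^ i) = 2 * T ℝ (2 ^ (i - 2)) := by
  have pi_pos := Real.pi_pos
  set m : ℕ := 2 ^ (i - 2) with hm
  have hm1 : 1 ≤ m := Nat.one_le_two_pow
  have hmR : (0 : ℝ) < (m : ℝ) := by exact_mod_cast hm1
  have h4m : 2 ^ i = 4 * m := by
    have his : i - 2 + 2 = i := by omega
    calc 2 ^ i = 2 ^ (i - 2 + 2) := by rw [his]
      _ = 4 * m := by rw [pow_add, hm]; ring
  have hZcast : (2 ^ (i - 2) : ℤ) = ((m : ℕ) : ℤ) := by push_cast [hm]; ring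
  -- the angle function
  set c : ℕ → ℝ := fun j => Real.cos ((2 * j + 1) * Real.pi / (2 * m)) with hc
  -- rewrite Omega as a product over range m
  have hne1 : 2 ^ i ≠ 1 := by
    have : (4 : ℕ) ≤ 2 ^ i := by
      calc (4:ℕ) = 2^2 := rfl
      _ ≤ 2 ^ i := Nat.pow_le_pow_right (by norm_num) hi
    omega
  have hset : (Finset.range (2 ^ i + 1)).filter
      (fun k => 1 ≤ k ∧ 2 * k ≤ 2 ^ i ∧ Nat.gcd k (2 ^ i) = 1)
      = (Finset.range m).image (fun j => 2 * j + 1) := by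
    ext k
    simp only [Finset.mem_filter, Finset.mem_range, Finset.mem_image]
    constructor
    · rintro ⟨hk1, hk2, hk3, hk4⟩
      have hodd : Odd k := by
        have := (Nat.coprime_pow_right_iff (n := i) (by omega) k 2).mp hk4
        exact Nat.coprime_two_right.mp this
      obtain ⟨j, rfl⟩ := hodd
      exact ⟨j, by omega, rfl⟩
    · rintro ⟨j, hj, rfl⟩
      refine ⟨by omega, by omega, by omega, ?_⟩
      refine (Nat.coprime_pow_right_iff (n := i) (by omega) _ 2).mpr ?_
      exact Nat.coprime_two_right.mpr ⟨j, by ring⟩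
  have hOmega : Omega (2 ^ i) = ∏ j ∈ Finset.range m,
      (Polynomial.C 2 * (Polynomial.X - Polynomial.C (c j))) := by
    rw [Omega, if_neg hne1, hset, Finset.prod_image (by intro a _ b _ h; have h' : 2 * a + 1 = 2 * b + 1 := h; omega)]
    refine Finset.prod_congr rfl fun j hj => ?_
    congr 2
    rw [hc]
    have : ((2 ^ i : ℕ) : ℝ) = 4 * (m : ℝ) := by exact_mod_cast h4m
    rw [this]
    push_cast
    field_simp
    ring
  -- the two polynomials
  set P : Polynomial ℝ := ∏ j ∈ Finset.range m,
      (Polynomial.C 2 * (Polynomial.X - Polynomial.C (c j))) with hP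
  set Q : Polynomial ℝ := 2 * T ℝ m with hQ
  -- angles lie in [0, π] and c is injective on range m
  have hangle : ∀ j < m, (2 * (j:ℝ) + 1) * Real.pi / (2 * m) ∈ Set.Icc (0:ℝ) Real.pi := by
    intro j hj
    constructor
    · positivity
    · rw [div_le_iff₀ (by positivity)]
      have h1 : (2 * (j:ℝ) + 1) ≤ 2 * (m:ℝ) := by
        have : (j:ℝ) + 1 ≤ (m:ℝ) := by exact_mod_cast hj
        linarith
      nlinarith
  have hcinj : ∀ j1 < m, ∀ j2 < m, c j1 = c j2 → j1 = j2 := by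
    intro j1 hj1 j2 hj2 h
    have hθ := Real.injOn_cos (hangle j1 hj1) (hangle j2 hj2) h
    rw [mul_div_assoc, mul_div_assoc] at hθ
    have h2 := mul_right_cancel₀
      (show Real.pi / (2 * (m:ℝ)) ≠ 0 by positivity) hθ
    have : (j1 : ℝ) = (j2 : ℝ) := by linarith
    exact_mod_cast this
  -- both vanish at each c j
  have hPeval : ∀ j < m, P.eval (c j) = 0 := by
    intro j hj
    rw [hP, Polynomial.eval_prod]
    refine Finset.prod_eq_zero (Finset.mem_range.mpr hj) ?_
    simp
  have hQeval : ∀ j < m, Q.eval (c j) = 0 := by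
    intro j hj
    rw [hQ]
    simp only [Polynomial.eval_mul, Polynomial.eval_ofNat]
    have := Polynomial.Chebyshev.T_real_cos ((2 * (j:ℝ) + 1) * Real.pi / (2 * m)) (m : ℤ)
    rw [hc]
    simp only []
    rw [this]
    have harg : ((m : ℤ) : ℝ) * ((2 * (j:ℝ) + 1) * Real.pi / (2 * m)) =
        (2 * (j:ℤ) + 1) * Real.pi / 2 := by
      push_cast
      field_simp
    rw [harg, Real.cos_eq_zero_iff.mpr ⟨j, rfl⟩]
    ring
  -- coefficient computations
  have hRprod : P = Polynomial.C 2 ^ m *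
      ∏ j ∈ Finset.range m, (Polynomial.X - Polynomial.C (c j)) := by
    rw [hP, Finset.prod_mul_distrib, Finset.prod_const, Finset.card_range]
  set R : Polynomial ℝ := ∏ j ∈ Finset.range m, (Polynomial.X - Polynomial.C (c j)) with hR
  have hRmonic : R.Monic := monic_prod_of_monic _ _ (fun j _ => monic_X_sub_C (c j))
  have hRdeg : R.natDegree = m := by
    rw [hR, Polynomial.natDegree_prod]
    · simp [Polynomial.natDegree_X_sub_C]
    · intro j _; exact X_sub_C_ne_zero (c j)
  have hPdeg : P.natDegree ≤ m := by
    rw [hRprod]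
    refine le_trans Polynomial.natDegree_mul_le ?_
    rw [hRdeg]
    simp [Polynomial.natDegree_pow]
  have hPcoeff : P.coeff m = 2 ^ m := by
    rw [hRprod, ← Polynomial.C_pow, Polynomial.coeff_C_mul, ← hRdeg,
      hRmonic.coeff_natDegree]
    simp
  obtain ⟨hTdeg, hTcoeff⟩ := T_deg_coeff m
  have hQdeg : Q.natDegree ≤ m := by
    rw [hQ]
    refine le_trans Polynomial.natDegree_mul_le ?_
    have : (2 : Polynomial ℝ).natDegree = 0 := Polynomial.natDegree_ofNat 2
    omega
  have hQcoeff : Q.coeff m = 2 ^ m := by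
    rw [hQ, Polynomial.coeff_ofNat_mul, hTcoeff]
    have hms : m - 1 + 1 = m := by omega
    calc (2:ℝ) * 2 ^ (m - 1) = 2 ^ (m - 1 + 1) := by rw [pow_succ]; ring
      _ = 2 ^ m := by rw [hms]
  -- conclude P = Q
  have hdiff : P - Q = 0 := by
    by_cases h0 : P - Q = 0
    · exact h0
    have hdeg : (P - Q).natDegree ≤ m := le_trans (Polynomial.natDegree_sub_le _ _) (by omega)
    have hcoeff : (P - Q).coeff m = 0 := by
      rw [Polynomial.coeff_sub, hPcoeff, hQcoeff, sub_self]
    have hlt : (P - Q).natDegree < m := by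
      rcases lt_or_eq_of_le hdeg with h | h
      · exact h
      · exact absurd (by rw [Polynomial.leadingCoeff, h]; exact hcoeff)
          (Polynomial.leadingCoeff_ne_zero.mpr h0)
    refine Polynomial.eq_zero_of_natDegree_lt_card_of_eval_eq_zero (P - Q)
      (f := fun j : Fin m => c j) ?_ ?_ ?_
    · intro a b hab
      exact Fin.ext (hcinj a a.isLt b b.isLt hab)
    · intro j
      rw [Polynomial.eval_sub, hPeval j j.isLt, hQeval j j.isLt, sub_self]
    · rwa [Fintype.card_fin]
  have : P = Q := by linear_combination hdiff
  rw [hOmega, this, hQ, hZcast]
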